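/- Let p be prime. The number of ghost multisets of PG(2,p), i.e., multisets of points with multiplicities in Z/pZ whose power sum polynomial is the zero polynomial, equals p^(binomial(p+1,2)+1). -/

import Mathlib

open MvPolynomial
open scoped LinearAlgebra.Projectivization

/-- The Rédei factor of a point of `PG(n,q)`. -/
noncomputable def redeiFactor {F : Type*} [Field F] {n : ℕ}
    (P : ℙ F (Fin n → F)) : MvPolynomial (Fin n) F :=
  ∑ i, C (P.rep i) * X i

/-- The power sum polynomial of a finite set of points of `PG(n,q)`. -/
noncomputable def powerSum {F : Type*} [Field F] [Fintype F] {n : ℕ}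
    (S : Finset (ℙ F (Fin n → F))) : MvPolynomial (Fin n) F :=
  ∑ P ∈ S, redeiFactor P ^ (Fintype.card F - 1)


/-- The power sum polynomial of a multiset of points of PG(2,q) with multiplicities
in ℤ/pℤ (p the characteristic of F). -/
noncomputable def mpowerSum (p : ℕ) {F : Type*} [Field F] [Fintype F] [CharP F p]
    [Fintype (ℙ F (Fin 3 → F))]
    (m : ℙ F (Fin 3 → F) → ZMod p) : MvPolynomial (Fin 3) F :=
  ∑ P : ℙ F (Fin 3 → F),
    ZMod.castHom (dvd_refl p) F (m P) • (redeiFactor P ^ (Fintype.card F - 1))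

/-! ### Auxiliary material for `card_ghosts` -/

section GhostAux

open Finset

variable (p : ℕ) [Fact p.Prime]

/-- The linear form attached to a vector. -/
noncomputable def ghostLF (v : Fin 3 → ZMod p) : MvPolynomial (Fin 3) (ZMod p) :=
  ∑ i, C (v i) * X i

/-- The monomial with exponent vector `k`. -/
noncomputable def ghostMono (k : Fin 3 → ℕ) : MvPolynomial (Fin 3) (ZMod p) :=
  ∏ i, X i ^ k i

lemma ghostMono_eq_monomial (k : Fin 3 → ℕ) :
    ghostMono p k = monomial (Finsupp.equivFunOnFinite.symm k) (1 : ZMod p) := by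
  classical
  rw [monomial_eq, map_one, one_mul, Finsupp.prod]
  rw [ghostMono]
  refine (Finset.prod_subset (Finset.subset_univ _) ?_).symm
  intro i _ hi
  have : (Finsupp.equivFunOnFinite.symm k) i = 0 := by
    simpa [Finsupp.mem_support_iff] using hi
  simp only [Finsupp.equivFunOnFinite_symm_apply_apply] at this ⊢
  simp [this]

lemma ghostLF_pow (v : Fin 3 → ZMod p) (n : ℕ) :
    ghostLF p v ^ n = ∑ k ∈ piAntidiag (univ : Finset (Fin 3)) n,
      C ((Nat.multinomial univ k : ZMod p) * ∏ i, v i ^ k i) * ghostMono p k := by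
  classical
  rw [ghostLF, Finset.sum_pow_eq_sum_piAntidiag]
  refine Finset.sum_congr rfl fun k _ => ?_
  rw [ghostMono, map_mul, map_natCast]
  rw [Finset.prod_congr rfl (fun i (_ : i ∈ univ) => mul_pow (C (v i)) (X i) (k i)),
    Finset.prod_mul_distrib]
  have : ∏ i, (C (v i) : MvPolynomial (Fin 3) (ZMod p)) ^ k i = C (∏ i, v i ^ k i) := by
    rw [map_prod]
    exact Finset.prod_congr rfl fun i _ => by rw [map_pow]
  rw [this]; ring

lemma ghost_Ssum (m : ℕ) :
    ∑ t : ZMod p, t ^ m = if m ≠ 0 ∧ (p - 1) ∣ m then (-1 : ZMod p) else 0 := by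
  classical
  by_cases hm : m = 0
  · subst hm
    simp [Finset.card_univ, ZMod.card, ZMod.natCast_self]
  · have h1 : ∑ t : ZMod p, t ^ m
        = ∑ t ∈ (univ : Finset (ZMod p)) \ {0}, t ^ m := by
      rw [← Finset.sum_sdiff (Finset.subset_univ {0})]
      simp [zero_pow hm]
    have h2 : ∑ t ∈ (univ : Finset (ZMod p)) \ {0}, t ^ m
        = ∑ x : (ZMod p)ˣ, (x : ZMod p) ^ m := by
      rw [Finset.sum_subtype (p := fun a : ZMod p => a ≠ 0) _ (fun x => by simp)
        (fun t => t ^ m)]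
      exact (Equiv.sum_comp (unitsEquivNeZero (G₀ := ZMod p))
        (fun s : {a : ZMod p // a ≠ 0} => (s : ZMod p) ^ m)).symm
    rw [h1, h2, FiniteField.sum_pow_units, ZMod.card]
    simp [hm]

lemma ghost_exp_eq (e k : Fin 3 → ℕ) (he : ∑ i, e i = p - 1) (hk : ∑ i, k i = p - 1)
    (h : ∀ i, (k i + (p - 1 - e i) ≠ 0 ∧ (p - 1) ∣ (k i + (p - 1 - e i)))) : k = e := by
  have hp : 2 ≤ p := (Fact.out : p.Prime).two_le
  have hp1 : 1 ≤ p - 1 := by omega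
  have hle : ∀ i, e i ≤ p - 1 := fun i =>
    he ▸ Finset.single_le_sum (fun j _ => Nat.zero_le _) (mem_univ i)
  have hlk : ∀ i, k i ≤ p - 1 := fun i =>
    hk ▸ Finset.single_le_sum (fun j _ => Nat.zero_le _) (mem_univ i)
  have key : ∀ i, k i = e i ∨ (k i = p - 1 ∧ e i = 0) := by
    intro i
    obtain ⟨h0, c, hc⟩ := h i
    have h1 : k i + (p - 1 - e i) ≤ 2 * (p - 1) := by
      have := hle i; have := hlk i; omega
    have hc2 : c = 1 ∨ c = 2 := by
      rcases Nat.lt_or_ge c 3 with h3 | h3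
      · interval_cases c <;> omega
      · exfalso
        have h4 : (p - 1) * 3 ≤ (p - 1) * c := Nat.mul_le_mul_left _ h3
        omega
    rcases hc2 with rfl | rfl
    · left; have := hle i; omega
    · right; have := hle i; have := hlk i; omega
  funext i
  by_contra hne
  rcases key i with h' | ⟨hki, hei⟩
  · exact hne h'
  have hsum : k i + ∑ j ∈ univ.erase i, k j = p - 1 := by
    rw [Finset.add_sum_erase _ _ (mem_univ i), hk]
  have hkj : ∀ j ∈ univ.erase i, k j = 0 := by
    intro j hj
    have := Finset.single_le_sum (f := k) (fun x _ => Nat.zero_le (k x)) hj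
    omega
  have hesum : ∑ j ∈ univ.erase i, e j = p - 1 := by
    have := Finset.add_sum_erase univ e (mem_univ i)
    omega
  have : ∃ j ∈ univ.erase i, e j ≠ 0 := by
    by_contra hno
    push_neg at hno
    rw [Finset.sum_eq_zero hno] at hesum
    omega
  obtain ⟨j, hj, hej⟩ := this
  rcases key j with h' | ⟨hkj', hej'⟩
  · rw [hkj j hj] at h'; exact hej h'.symm
  · exact hej hej'

lemma ghost_key (e : Fin 3 → ℕ) (he : e ∈ piAntidiag (univ : Finset (Fin 3)) (p - 1)) :
    ∑ v : Fin 3 → ZMod p, C (∏ i, v i ^ (p - 1 - e i)) * ghostLF p v ^ (p - 1)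
      = C (-(Nat.multinomial univ e : ZMod p)) * ghostMono p e := by
  classical
  have hp : 2 ≤ p := (Fact.out : p.Prime).two_le
  rw [mem_piAntidiag] at he
  have hesum : ∑ i, e i = p - 1 := he.1
  have hele : ∀ i, e i ≤ p - 1 := fun i =>
    hesum ▸ Finset.single_le_sum (fun j _ => Nat.zero_le _) (mem_univ i)
  simp only [ghostLF_pow, Finset.mul_sum]
  rw [Finset.sum_comm]
  have step : ∀ k ∈ piAntidiag (univ : Finset (Fin 3)) (p - 1),
      (∑ v : Fin 3 → ZMod p,
        C (∏ i, v i ^ (p - 1 - e i)) *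
          (C ((Nat.multinomial univ k : ZMod p) * ∏ i, v i ^ k i) * ghostMono p k))
      = C ((Nat.multinomial univ k : ZMod p) *
          ∏ i, (if k i + (p - 1 - e i) ≠ 0 ∧ (p - 1) ∣ (k i + (p - 1 - e i))
                then (-1 : ZMod p) else 0)) * ghostMono p k := by
    intro k _
    have h1 : ∀ v : Fin 3 → ZMod p,
        C (∏ i, v i ^ (p - 1 - e i)) *
          (C ((Nat.multinomial univ k : ZMod p) * ∏ i, v i ^ k i) * ghostMono p k)
        = C ((Nat.multinomial univ k : ZMod p) * ∏ i, v i ^ (k i + (p - 1 - e i)))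
            * ghostMono p k := by
      intro v
      rw [← mul_assoc, ← C_mul]
      congr 2
      rw [mul_left_comm]
      congr 1
      rw [← Finset.prod_mul_distrib]
      exact Finset.prod_congr rfl fun i _ => by rw [← pow_add, Nat.add_comm]
    simp only [h1]
    rw [← Finset.sum_mul, ← map_sum, ← Finset.mul_sum]
    have h2 := Finset.sum_prod_piFinset (ι := Fin 3) (univ : Finset (ZMod p))
      (fun i t => t ^ (k i + (p - 1 - e i)))
    rw [Fintype.piFinset_univ] at h2
    rw [h2, Finset.prod_congr rfl fun i (_ : i ∈ (univ : Finset (Fin 3))) =>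
      ghost_Ssum p (k i + (p - 1 - e i))]
  rw [Finset.sum_congr rfl step]
  rw [Finset.sum_eq_single_of_mem e (by rw [mem_piAntidiag]; exact he)]
  · have : ∀ i : Fin 3, (if e i + (p - 1 - e i) ≠ 0 ∧ (p - 1) ∣ (e i + (p - 1 - e i))
        then (-1 : ZMod p) else 0) = -1 := by
      intro i
      rw [if_pos]
      constructor
      · have := hele i; omega
      · have : e i + (p - 1 - e i) = p - 1 := by have := hele i; omega
        rw [this]
    rw [Finset.prod_congr rfl fun i _ => this i]
    norm_num
  · intro k hk hke
    rw [mem_piAntidiag] at hk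
    have : ∃ i : Fin 3, ¬(k i + (p - 1 - e i) ≠ 0 ∧ (p - 1) ∣ (k i + (p - 1 - e i))) := by
      by_contra hno
      push_neg at hno
      exact hke (ghost_exp_eq p e k hesum hk.1 (fun i => ⟨(hno i).1, (hno i).2⟩))
    obtain ⟨i, hi⟩ := this
    rw [Finset.prod_eq_zero (mem_univ i) (by rw [if_neg hi])]
    simp

/-- The product of projective space with units is equivalent to nonzero vectors. -/
noncomputable def ghostEquiv :
    (ℙ (ZMod p) (Fin 3 → ZMod p)) × (ZMod p)ˣ ≃ {v : Fin 3 → ZMod p // v ≠ 0} := by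
  refine Equiv.ofBijective (fun Pc => ⟨(Pc.2 : ZMod p) • Pc.1.rep,
    smul_ne_zero (Units.ne_zero Pc.2) Pc.1.rep_nonzero⟩) ⟨?_, ?_⟩
  · rintro ⟨P, c⟩ ⟨Q, d⟩ h
    simp only [Subtype.mk_eq_mk] at h
    have hPQ : P = Q := by
      have h1 : Projectivization.mk (ZMod p) ((c : ZMod p) • P.rep)
          (smul_ne_zero (Units.ne_zero c) P.rep_nonzero) = P := by
        conv_rhs => rw [← P.mk_rep]
        rw [Projectivization.mk_eq_mk_iff]
        exact ⟨c, rfl⟩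
      have h2 : Projectivization.mk (ZMod p) ((d : ZMod p) • Q.rep)
          (smul_ne_zero (Units.ne_zero d) Q.rep_nonzero) = Q := by
        conv_rhs => rw [← Q.mk_rep]
        rw [Projectivization.mk_eq_mk_iff]
        exact ⟨d, rfl⟩
      rw [← h1, ← h2]
      congr 1
    subst hPQ
    have hcd : (c : ZMod p) = d := by
      have h3 : ((c : ZMod p) - d) • P.rep = 0 := by
        rw [sub_smul, h, sub_self]
      by_contra hne
      exact P.rep_nonzero (by
        have := smul_eq_zero.mp h3
        rcases this with h' | h'
        · exact absurd h' (sub_ne_zero.mpr hne)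
        · exact h')
    simp [Prod.ext_iff, Units.ext_iff, hcd]
  · rintro ⟨v, hv⟩
    have h1 : Projectivization.mk (ZMod p) ((Projectivization.mk (ZMod p) v hv).rep)
        (Projectivization.rep_nonzero _) = Projectivization.mk (ZMod p) v hv :=
      Projectivization.mk_rep _
    rw [Projectivization.mk_eq_mk_iff] at h1
    obtain ⟨a, ha⟩ := h1
    exact ⟨⟨Projectivization.mk (ZMod p) v hv, a⁻¹⟩, by
      simp only [Subtype.mk_eq_mk]
      rw [← ha, Units.smul_def, smul_smul, Units.inv_mul, one_smul]⟩

lemma ghost_card_proj [Fintype (ℙ (ZMod p) (Fin 3 → ZMod p))] :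
    Fintype.card (ℙ (ZMod p) (Fin 3 → ZMod p)) = p ^ 2 + p + 1 := by
  classical
  have hp : 2 ≤ p := (Fact.out : p.Prime).two_le
  have h1 : Fintype.card ((ℙ (ZMod p) (Fin 3 → ZMod p)) × (ZMod p)ˣ)
      = Fintype.card {v : Fin 3 → ZMod p // v ≠ 0} := Fintype.card_congr (ghostEquiv p)
  rw [Fintype.card_prod, ZMod.card_units] at h1
  have h2 : Fintype.card {v : Fin 3 → ZMod p // v ≠ 0} = p ^ 3 - 1 := by
    rw [Fintype.card_subtype_compl (fun v : Fin 3 → ZMod p => v = 0)]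
    rw [Fintype.card_subtype_eq (0 : Fin 3 → ZMod p)]
    congr 1
    rw [Fintype.card_pi]
    simp [ZMod.card]
  rw [h2] at h1
  obtain ⟨k, rfl⟩ : ∃ k, p = k + 2 := ⟨p - 2, by omega⟩
  have h3 : (k + 2) ^ 3 = (k + 1) * (k ^ 2 + 5 * k + 7) + 1 := by ring
  have h4 : (k + 2) ^ 2 + (k + 2) + 1 = k ^ 2 + 5 * k + 7 := by ring
  rw [h4]
  have h5 : Fintype.card (ℙ (ZMod (k + 2)) (Fin 3 → ZMod (k + 2))) * (k + 1)
      = (k + 1) * (k ^ 2 + 5 * k + 7) := by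
    norm_num at h1
    rw [h1, h3]; omega
  rw [mul_comm] at h5
  exact Nat.eq_of_mul_eq_mul_left (by omega) h5

lemma ghostLF_smul (c : ZMod p) (v : Fin 3 → ZMod p) :
    ghostLF p (c • v) = C c * ghostLF p v := by
  rw [ghostLF, ghostLF, Finset.mul_sum]
  refine Finset.sum_congr rfl fun i _ => ?_
  rw [Pi.smul_apply, smul_eq_mul, map_mul, mul_assoc]

lemma ghost_pow_mem (v : Fin 3 → ZMod p) :
    ghostLF p v ^ (p - 1) ∈ Submodule.span (ZMod p)
      (Set.range fun P : ℙ (ZMod p) (Fin 3 → ZMod p) => redeiFactor P ^ (p - 1)) := by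
  have hp : 2 ≤ p := (Fact.out : p.Prime).two_le
  by_cases hv : v = 0
  · subst hv
    have : ghostLF p (0 : Fin 3 → ZMod p) = 0 := by
      rw [ghostLF]; simp
    rw [this, zero_pow (by omega : p - 1 ≠ 0)]
    exact Submodule.zero_mem _
  · set P := Projectivization.mk (ZMod p) v hv with hP
    have h1 : Projectivization.mk (ZMod p) P.rep P.rep_nonzero
        = Projectivization.mk (ZMod p) v hv := Projectivization.mk_rep _
    rw [Projectivization.mk_eq_mk_iff] at h1
    obtain ⟨a, ha⟩ := h1
    have h2 : redeiFactor P ^ (p - 1) = ghostLF p v ^ (p - 1) := by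
      have : redeiFactor P = ghostLF p P.rep := rfl
      rw [this, ← ha, Units.smul_def, ghostLF_smul, mul_pow, ← map_pow,
        ZMod.pow_card_sub_one_eq_one (Units.ne_zero a), map_one, one_mul]
    rw [← h2]
    exact Submodule.subset_span ⟨P, rfl⟩

lemma ghost_multinomial_ne (e : Fin 3 → ℕ) (he : ∑ i, e i = p - 1) :
    (Nat.multinomial univ e : ZMod p) ≠ 0 := by
  intro h0
  have hs := Nat.multinomial_spec (univ : Finset (Fin 3)) e
  rw [he] at hs
  have : ((∏ i, (e i).factorial : ℕ) : ZMod p) * ((Nat.multinomial univ e : ℕ) : ZMod p)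
      = ((p - 1).factorial : ZMod p) := by
    exact_mod_cast congrArg (Nat.cast : ℕ → ZMod p) hs
  rw [h0, mul_zero, ZMod.wilsons_lemma] at this
  exact one_ne_zero (neg_eq_zero.mp this.symm)

lemma ghost_mono_mem (e : Fin 3 → ℕ) (he : e ∈ piAntidiag (univ : Finset (Fin 3)) (p - 1)) :
    ghostMono p e ∈ Submodule.span (ZMod p)
      (Set.range fun P : ℙ (ZMod p) (Fin 3 → ZMod p) => redeiFactor P ^ (p - 1)) := by
  have hesum : ∑ i, e i = p - 1 := (mem_piAntidiag.mp he).1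
  have hne : -(Nat.multinomial univ e : ZMod p) ≠ 0 :=
    neg_ne_zero.mpr (ghost_multinomial_ne p e hesum)
  have hmem : (∑ v : Fin 3 → ZMod p,
      C (∏ i, v i ^ (p - 1 - e i)) * ghostLF p v ^ (p - 1)) ∈ Submodule.span (ZMod p)
      (Set.range fun P : ℙ (ZMod p) (Fin 3 → ZMod p) => redeiFactor P ^ (p - 1)) := by
    refine Submodule.sum_mem _ fun v _ => ?_
    have := Submodule.smul_mem (Submodule.span (ZMod p)
      (Set.range fun P : ℙ (ZMod p) (Fin 3 → ZMod p) => redeiFactor P ^ (p - 1)))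
      (∏ i, v i ^ (p - 1 - e i)) (ghost_pow_mem p v)
    rwa [smul_eq_C_mul] at this
  rw [ghost_key p e he] at hmem
  have heq : ghostMono p e = (-(Nat.multinomial univ e : ZMod p))⁻¹ •
      (C (-(Nat.multinomial univ e : ZMod p)) * ghostMono p e) := by
    rw [smul_eq_C_mul, ← mul_assoc, ← C_mul, inv_mul_cancel₀ hne, C_1, one_mul]
  rw [heq]
  exact Submodule.smul_mem _ _ hmem

lemma ghost_span_eq :
    Submodule.span (ZMod p)
      (Set.range fun P : ℙ (ZMod p) (Fin 3 → ZMod p) => redeiFactor P ^ (p - 1))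
    = Submodule.span (ZMod p)
      (ghostMono p '' ↑(piAntidiag (univ : Finset (Fin 3)) (p - 1))) := by
  apply le_antisymm
  · rw [Submodule.span_le]
    rintro x ⟨P, rfl⟩
    show ghostLF p P.rep ^ (p - 1) ∈ _
    rw [ghostLF_pow]
    refine Submodule.sum_mem _ fun k hk => ?_
    have hmem : ghostMono p k ∈ Submodule.span (ZMod p)
        (ghostMono p '' ↑(piAntidiag (univ : Finset (Fin 3)) (p - 1))) :=
      Submodule.subset_span ⟨k, hk, rfl⟩
    have := Submodule.smul_mem (Submodule.span (ZMod p)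
      (ghostMono p '' ↑(piAntidiag (univ : Finset (Fin 3)) (p - 1))))
      ((Nat.multinomial univ k : ZMod p) * ∏ i, P.rep i ^ k i) hmem
    rwa [smul_eq_C_mul] at this
  · rw [Submodule.span_le]
    rintro x ⟨e, he, rfl⟩
    exact ghost_mono_mem p e he

lemma ghost_card_T : (piAntidiag (univ : Finset (Fin 3)) (p - 1)).card = (p + 1).choose 2 := by
  classical
  have hp : 2 ≤ p := (Fact.out : p.Prime).two_le
  rw [← Finset.map_sym_eq_piAntidiag, Finset.card_map, Finset.sym_univ, Finset.card_univ,
    Sym.card_sym_eq_choose, Fintype.card_fin]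
  have h1 : 3 + (p - 1) - 1 = p + 1 := by omega
  rw [h1]
  have h2 : p + 1 - 2 = p - 1 := by omega
  rw [← h2, Nat.choose_symm (by omega)]

lemma ghost_finrank_span :
    Module.finrank (ZMod p) (Submodule.span (ZMod p)
      (ghostMono p '' ↑(piAntidiag (univ : Finset (Fin 3)) (p - 1)))) = (p + 1).choose 2 := by
  classical
  set T := piAntidiag (univ : Finset (Fin 3)) (p - 1) with hT
  have hinj : Function.Injective
      (fun k : {x // x ∈ T} => Finsupp.equivFunOnFinite.symm (k : Fin 3 → ℕ)) := by
    intro a b h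
    exact Subtype.ext (Finsupp.equivFunOnFinite.symm.injective h)
  have hli : LinearIndependent (ZMod p) (fun k : {x // x ∈ T} => ghostMono p (k : Fin 3 → ℕ)) := by
    have := ((MvPolynomial.basisMonomials (Fin 3) (ZMod p)).linearIndependent).comp _ hinj
    convert this using 1
    funext k
    rw [Function.comp_apply, MvPolynomial.coe_basisMonomials, ghostMono_eq_monomial]
    all_goals rfl
  have hcard := finrank_span_eq_card hli
  have himg : (ghostMono p '' ↑T)
      = Set.range fun k : {x // x ∈ T} => ghostMono p (k : Fin 3 → ℕ) := by
    ext x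
    simp [Set.mem_image, Set.mem_range, Subtype.exists]
  rw [himg, hcard, Fintype.card_coe, ghost_card_T]

end GhostAux

/-- The number of ghost multisets of PG(2,p) (multiplicities mod p, zero power sum
polynomial) is p^(binomial(p+1,2)+1). -/
theorem card_ghosts (p : ℕ) [Fact p.Prime]
    [Fintype (ℙ (ZMod p) (Fin 3 → ZMod p))] :
    Nat.card {m : ℙ (ZMod p) (Fin 3 → ZMod p) → ZMod p // mpowerSum p m = 0}
      = p ^ (Nat.choose (p + 1) 2 + 1) := by
  classical
  have hp : 2 ≤ p := (Fact.out : p.Prime).two_le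
  set f : ℙ (ZMod p) (Fin 3 → ZMod p) → MvPolynomial (Fin 3) (ZMod p) :=
    fun P => redeiFactor P ^ (p - 1) with hf
  let L : (ℙ (ZMod p) (Fin 3 → ZMod p) → ZMod p) →ₗ[ZMod p] MvPolynomial (Fin 3) (ZMod p) :=
    { toFun := fun m => ∑ P, m P • f P
      map_add' := fun m₁ m₂ => by
        simp only [Pi.add_apply, add_smul]
        rw [Finset.sum_add_distrib]
      map_smul' := fun c m => by
        simp only [Pi.smul_apply, smul_eq_mul, RingHom.id_apply, ← smul_smul]
        rw [Finset.smul_sum] }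
  have hms : ∀ m, mpowerSum p m = L m := by
    intro m
    show (∑ P : ℙ (ZMod p) (Fin 3 → ZMod p),
        ZMod.castHom (dvd_refl p) (ZMod p) (m P) •
          (redeiFactor P ^ (Fintype.card (ZMod p) - 1))) = ∑ P, m P • f P
    refine Finset.sum_congr rfl fun P _ => ?_
    rw [ZMod.castHom_apply, ZMod.cast_id, ZMod.card]
  have hker : Nat.card {m : ℙ (ZMod p) (Fin 3 → ZMod p) → ZMod p // mpowerSum p m = 0}
      = Nat.card (LinearMap.ker L) := by
    refine Nat.card_congr (Equiv.subtypeEquivRight fun m => ?_)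
    rw [hms m]
    exact (LinearMap.mem_ker (f := L)).symm
  have hrange : LinearMap.range L = Submodule.span (ZMod p) (Set.range f) := by
    apply le_antisymm
    · rintro x ⟨m, rfl⟩
      exact Submodule.sum_mem _ fun P _ =>
        Submodule.smul_mem _ _ (Submodule.subset_span ⟨P, rfl⟩)
    · rw [Submodule.span_le]
      rintro x ⟨P, rfl⟩
      have hL1 : L (Pi.single P 1) = f P := by
        simp only [L, LinearMap.coe_mk, AddHom.coe_mk]
        rw [Finset.sum_eq_single P]
        · simp
        · intro Q _ hQ; rw [Pi.single_eq_of_ne hQ, zero_smul]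
        · intro h; exact absurd (Finset.mem_univ P) h
      exact ⟨Pi.single P 1, hL1⟩
  have hrk : Module.finrank (ZMod p) (LinearMap.range L) = (p + 1).choose 2 := by
    rw [hrange]
    have : Set.range f = Set.range fun P : ℙ (ZMod p) (Fin 3 → ZMod p) =>
        redeiFactor P ^ (p - 1) := rfl
    rw [this, ghost_span_eq p, ghost_finrank_span p]
  have hRN := LinearMap.finrank_range_add_finrank_ker L
  rw [Module.finrank_fintype_fun_eq_card, ghost_card_proj p, hrk] at hRN
  have h2r : (p + 1).choose 2 * 2 = (p + 1) * p := by
    rw [Nat.choose_two_right]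
    have h : p + 1 - 1 = p := by omega
    rw [h]
    exact Nat.div_mul_cancel (by rw [mul_comm]; exact (Nat.even_mul_succ_self p).two_dvd)
  have hexp : (p + 1) * p = p * p + p := by ring
  rw [hexp] at h2r
  have hpp : p ^ 2 = p * p := by ring
  rw [hpp] at hRN
  have hfk : Module.finrank (ZMod p) (LinearMap.ker L) = (p + 1).choose 2 + 1 := by
    omega
  have finK : Fintype (LinearMap.ker L) := Fintype.ofFinite _
  rw [hker, Nat.card_eq_fintype_card, Module.card_eq_pow_finrank (K := ZMod p), ZMod.card, hfk]
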